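/- Let T be the complete binary tree of height h ≥ 2 and let r be a positive integer with 1 ≤ r ≤ 2h − 1. Then the curling number of the r-th power T^r equals 2^h. -/

import Mathlib

open Finset

/-- The degree of a vertex `v` in a simple graph `G`: the number of its neighbours. -/
noncomputable def gdeg {V : Type*} (G : SimpleGraph V) (v : V) : ℕ :=
  (G.neighborSet v).ncard

/-- The curling number of a finite simple graph: the maximum number of vertices
of `G` sharing a common degree. -/
noncomputable def curlingNumber {V : Type*} [Fintype V] (G : SimpleGraph V) : ℕ :=
  Finset.univ.sup fun v => (Finset.univ.filter fun u => gdeg G u = gdeg G v).card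

/-- The `r`-th power of a simple graph `G`: same vertex set, two distinct vertices
adjacent iff their distance in `G` is (finite and) at most `r`. -/
def SimpleGraph.power {V : Type*} (G : SimpleGraph V) (r : ℕ) : SimpleGraph V where
  Adj u v := u ≠ v ∧ G.Reachable u v ∧ G.dist u v ≤ r
  symm := by
    constructor
    rintro u v ⟨h1, h2, h3⟩
    exact ⟨h1.symm, h2.symm, by rwa [SimpleGraph.dist_comm]⟩
  loopless := by
    constructor
    rintro v ⟨h1, -, -⟩
    exact h1 rfl

/-- The complete `n`-ary tree of height `h`: the vertices at depth `i` (`0 ≤ i ≤ h`) are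
indexed by `Fin (n ^ i)`, and vertex `k` at depth `i + 1` is a child of vertex `k / n`
at depth `i`. -/
def completeNaryTree (n h : ℕ) : SimpleGraph (Σ i : Fin (h + 1), Fin (n ^ (i : ℕ))) where
  Adj u v :=
    ((u.1 : ℕ) + 1 = (v.1 : ℕ) ∧ (v.2 : ℕ) / n = (u.2 : ℕ)) ∨
    ((v.1 : ℕ) + 1 = (u.1 : ℕ) ∧ (u.2 : ℕ) / n = (v.2 : ℕ))
  symm := ⟨fun u v h => h.symm⟩
  loopless := ⟨fun u h => by rcases h with ⟨h1, -⟩ | ⟨h1, -⟩ <;> omega⟩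


open SimpleGraph

namespace CBT

abbrev V (h : ℕ) := Σ i : Fin (h + 1), Fin (2 ^ (i : ℕ))

lemma size_le_of_lt {l j : ℕ} (hl : l < 2 ^ j) : Nat.size l ≤ j := Nat.size_le.2 hl

lemma size_div_two (l : ℕ) : Nat.size (l / 2) = Nat.size l - 1 := by
  rcases Nat.eq_zero_or_pos l with rfl | hl
  · simp
  · have hs : 1 ≤ Nat.size l := Nat.size_pos.mpr hl
    apply le_antisymm
    · apply Nat.size_le.mpr
      have h1 : l < 2 ^ Nat.size l := Nat.lt_size_self l
      have h2 : 2 ^ Nat.size l = 2 * 2 ^ (Nat.size l - 1) := by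
        rw [← pow_succ']; congr 1; omega
      omega
    · rcases Nat.lt_or_ge l 2 with h2 | h2
      · interval_cases l <;> simp
      · have hs2 : 2 ≤ Nat.size l := Nat.lt_size.mpr (by simpa using h2)
        have h3 : 2 ^ (Nat.size l - 1) ≤ l := Nat.lt_size.mp (by omega)
        have h4 : 2 ^ (Nat.size l - 1) = 2 * 2 ^ (Nat.size l - 2) := by
          rw [← pow_succ']; congr 1; omega
        have h5 : 2 ^ (Nat.size l - 2) ≤ l / 2 := by omega
        have h6 := Nat.lt_size.mpr h5
        omega

/-- distance profile function: `fd d j s` is the distance from a vertex at depth `j`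
whose index has binary size `s` to the leftmost vertex at depth `d`. -/
def fd (d j s : ℕ) : ℕ := j + d - 2 * min d (j - s)

lemma fd_le_iff {d j s rr : ℕ} (hs : s ≤ j) : fd d j s ≤ rr ↔ 2*s + d ≤ rr + j ∧ j ≤ d + rr := by
  unfold fd; rw [Nat.min_def]; split_ifs <;> omega

variable {h : ℕ}

lemma vert_eq {j₁ j₂ l₁ l₂ : ℕ} (hj : j₁ = j₂) (hl : l₁ = l₂) (p₁ : j₁ < h+1) (p₂ : l₁ < 2^j₁)
    (p₃ : j₂ < h+1) (p₄ : l₂ < 2^j₂) :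
    (⟨⟨j₁, p₁⟩, ⟨l₁, p₂⟩⟩ : V h) = ⟨⟨j₂, p₃⟩, ⟨l₂, p₄⟩⟩ := by subst hj; subst hl; rfl

lemma adj_up {j : ℕ} (hj : j + 1 < h + 1) (l : ℕ) (hl : l < 2 ^ (j+1)) :
    (completeNaryTree 2 h).Adj ⟨⟨j+1, hj⟩, ⟨l, hl⟩⟩
      ⟨⟨j, by omega⟩, ⟨l / 2, by
        show l / 2 < 2 ^ j
        have h2 : (2:ℕ)^(j+1) = 2*2^j := by rw [← pow_succ']
        omega⟩⟩ :=
  Or.inr ⟨rfl, rfl⟩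

def root (h : ℕ) : V h := ⟨⟨0, Nat.succ_pos h⟩, ⟨0, Nat.two_pow_pos 0⟩⟩

lemma reachable_root : ∀ (j : ℕ) (hj : j < h+1) (l : ℕ) (hl : l < 2^j),
    (completeNaryTree 2 h).Reachable ⟨⟨j, hj⟩, ⟨l, hl⟩⟩ (root h) := by
  intro j
  induction j with
  | zero =>
    intro hj l hl
    have : l = 0 := by omega
    subst this
    exact Reachable.refl _
  | succ j ih =>
    intro hj l hl
    exact ((adj_up hj l hl).reachable).trans (ih (by omega) _ _)

lemma reachable_all (u v : V h) : (completeNaryTree 2 h).Reachable u v := by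
  obtain ⟨⟨j, hj⟩, l, hl⟩ := u
  obtain ⟨⟨j', hj'⟩, l', hl'⟩ := v
  exact (reachable_root j hj l hl).trans (reachable_root j' hj' l' hl').symm

lemma connected : (completeNaryTree 2 h).Connected := by
  haveI : Nonempty (V h) := ⟨root h⟩
  exact ⟨reachable_all⟩

lemma vertex_ext {x y : V h} (h1 : (x.1 : ℕ) = (y.1 : ℕ)) (h2 : (x.2 : ℕ) = (y.2 : ℕ)) :
    x = y := by
  obtain ⟨⟨j, hj⟩, ⟨l, hl⟩⟩ := x
  obtain ⟨⟨j', hj'⟩, ⟨l', hl'⟩⟩ := y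
  simp only [Fin.val_mk] at h1 h2
  subst h1
  subst h2
  rfl

lemma dist_one_of_adj {u v : V h} (huv : (completeNaryTree 2 h).Adj u v) :
    (completeNaryTree 2 h).dist u v ≤ 1 :=
  (SimpleGraph.dist_eq_one_iff_adj.mpr huv).le

lemma dist_up : ∀ (t : ℕ) (x y : V h), (x.1 : ℕ) = (y.1 : ℕ) + t →
    (x.2 : ℕ) / 2 ^ t = (y.2 : ℕ) → (completeNaryTree 2 h).dist x y ≤ t := by
  intro t
  induction t with
  | zero =>
    intro x y h1 h2
    have hxy : x = y := vertex_ext h1 (by simpa using h2)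
    subst hxy
    rw [SimpleGraph.dist_self]
  | succ t ih =>
    intro x y h1 h2
    have hl2 : (x.2 : ℕ) / 2 < 2 ^ ((y.1 : ℕ) + t) := by
      have hx : (x.2 : ℕ) < 2 ^ ((x.1 : ℕ)) := x.2.isLt
      have hx2 : (2:ℕ) ^ ((x.1:ℕ)) = 2 ^ ((y.1:ℕ) + (t+1)) := by rw [h1]
      have h3 : (2:ℕ) ^ ((y.1:ℕ) + (t+1)) = 2 * 2 ^ ((y.1:ℕ) + t) := by
        rw [← pow_succ']
        rfl
      omega
    have hjt : (y.1 : ℕ) + t < h + 1 := by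
      have := x.1.isLt; omega
    set mid : V h := ⟨⟨(y.1:ℕ) + t, hjt⟩, ⟨(x.2:ℕ) / 2, hl2⟩⟩ with hmid
    have hadj : (completeNaryTree 2 h).Adj x mid := by
      refine Or.inr ⟨?_, ?_⟩
      · show ((y.1:ℕ) + t) + 1 = (x.1 : ℕ); omega
      · rfl
    have hmid1 : (mid.1 : ℕ) = (y.1 : ℕ) + t := rfl
    have hmid2 : (mid.2 : ℕ) / 2 ^ t = (y.2 : ℕ) := by
      show (x.2:ℕ) / 2 / 2 ^ t = (y.2 : ℕ)
      rw [Nat.div_div_eq_div_mul, ← pow_succ']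
      exact h2
    have h3 := ih mid y hmid1 hmid2
    have h4 := dist_one_of_adj hadj
    have htri := (connected (h := h)).dist_triangle (u := x) (v := mid) (w := y)
    omega

lemma dist_down0 : ∀ (t : ℕ) (x y : V h), (y.1 : ℕ) = (x.1 : ℕ) + t →
    (x.2 : ℕ) = 0 → (y.2 : ℕ) = 0 → (completeNaryTree 2 h).dist x y ≤ t := by
  intro t
  induction t with
  | zero =>
    intro x y h1 h2 h3
    have hxy : x = y := vertex_ext (by omega) (by omega)
    subst hxy
    rw [SimpleGraph.dist_self]
  | succ t ih =>
    intro x y h1 h2 h3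
    have hjt : (x.1 : ℕ) + t < h + 1 := by have := y.1.isLt; omega
    set mid : V h := ⟨⟨(x.1:ℕ) + t, hjt⟩, ⟨0, Nat.two_pow_pos _⟩⟩ with hmid
    have hadj : (completeNaryTree 2 h).Adj mid y := by
      refine Or.inl ⟨?_, ?_⟩
      · show ((x.1:ℕ) + t) + 1 = (y.1 : ℕ); omega
      · show (y.2 : ℕ) / 2 = (mid.2 : ℕ); rw [h3]
    have h4 := ih x mid rfl h2 rfl
    have h5 := dist_one_of_adj hadj
    have htri := (connected (h := h)).dist_triangle (u := x) (v := mid) (w := y)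
    omega

lemma dist_le_fd (x y : V h) (hy : (y.2 : ℕ) = 0) :
    (completeNaryTree 2 h).dist x y ≤ fd (y.1 : ℕ) (x.1 : ℕ) (Nat.size (x.2 : ℕ)) := by
  have hsj : Nat.size (x.2 : ℕ) ≤ (x.1 : ℕ) := size_le_of_lt x.2.isLt
  have haj2 : min (y.1 : ℕ) ((x.1 : ℕ) - Nat.size (x.2 : ℕ)) < h + 1 := by
    have := y.1.isLt; omega
  have h0 : (x.2 : ℕ) / 2 ^ ((x.1 : ℕ) - min (y.1 : ℕ) ((x.1 : ℕ) - Nat.size (x.2 : ℕ))) = 0 := by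
    apply Nat.div_eq_of_lt
    calc (x.2 : ℕ) < 2 ^ Nat.size (x.2 : ℕ) := Nat.lt_size_self _
    _ ≤ 2 ^ ((x.1 : ℕ) - min (y.1 : ℕ) ((x.1 : ℕ) - Nat.size (x.2 : ℕ))) :=
        Nat.pow_le_pow_right (by norm_num) (by omega)
  have hup := dist_up ((x.1 : ℕ) - min (y.1 : ℕ) ((x.1 : ℕ) - Nat.size (x.2 : ℕ))) x
    (⟨⟨_, haj2⟩, ⟨0, Nat.two_pow_pos _⟩⟩ : V h) (by simp only [Fin.val_mk]; omega) (by exact h0)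
  have hdown := dist_down0 ((y.1 : ℕ) - min (y.1 : ℕ) ((x.1 : ℕ) - Nat.size (x.2 : ℕ)))
    (⟨⟨_, haj2⟩, ⟨0, Nat.two_pow_pos _⟩⟩ : V h) y (by simp only [Fin.val_mk]; omega) rfl hy
  have htri := (connected (h := h)).dist_triangle (u := x)
    (v := (⟨⟨_, haj2⟩, ⟨0, Nat.two_pow_pos _⟩⟩ : V h)) (w := y)
  unfold fd
  omega

lemma fd_lip {x y : V h} (hxy : (completeNaryTree 2 h).Adj x y) (d : ℕ) :
    fd d (x.1 : ℕ) (Nat.size (x.2 : ℕ)) ≤ fd d (y.1 : ℕ) (Nat.size (y.2 : ℕ)) + 1 := by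
  have hx : Nat.size (x.2 : ℕ) ≤ (x.1 : ℕ) := size_le_of_lt x.2.isLt
  have hy : Nat.size (y.2 : ℕ) ≤ (y.1 : ℕ) := size_le_of_lt y.2.isLt
  rcases hxy with ⟨h1, h2⟩ | ⟨h1, h2⟩
  · -- x.1 + 1 = y.1, y.2/2 = x.2 : y is a child of x
    have hs : Nat.size ((y.2 : ℕ) / 2) = Nat.size (y.2 : ℕ) - 1 := size_div_two _
    rw [h2] at hs
    have hz : (y.2 : ℕ) = 0 → Nat.size (y.2 : ℕ) = 0 := fun hh => by simp [hh]
    have hz2 : (y.2 : ℕ) ≠ 0 → 1 ≤ Nat.size (y.2 : ℕ) := fun hh =>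
      Nat.size_pos.mpr (Nat.pos_of_ne_zero hh)
    rcases Nat.eq_zero_or_pos (y.2 : ℕ) with h0 | h0
    · have := hz h0
      have hx0 : Nat.size (x.2 : ℕ) = 0 := by omega
      unfold fd; omega
    · have := hz2 (by omega)
      unfold fd; omega
  · -- y.1 + 1 = x.1, x.2/2 = y.2 : x is a child of y
    have hs : Nat.size ((x.2 : ℕ) / 2) = Nat.size (x.2 : ℕ) - 1 := size_div_two _
    rw [h2] at hs
    rcases Nat.eq_zero_or_pos (x.2 : ℕ) with h0 | h0
    · have hx0 : Nat.size (x.2 : ℕ) = 0 := by simp [h0]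
      have hy0 : Nat.size (y.2 : ℕ) = 0 := by omega
      unfold fd; omega
    · have := Nat.size_pos.mpr h0
      unfold fd; omega

lemma fd_le_walk {x y : V h} (hy : (y.2 : ℕ) = 0) (p : (completeNaryTree 2 h).Walk x y) :
    fd (y.1 : ℕ) (x.1 : ℕ) (Nat.size (x.2 : ℕ)) ≤ p.length := by
  induction p with
  | nil =>
    rw [hy]
    simp only [Nat.size_zero, SimpleGraph.Walk.length_nil]
    unfold fd; omega
  | @cons u v w huv q ih =>
    have := fd_lip huv (w.1 : ℕ)
    simp only [SimpleGraph.Walk.length_cons]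
    omega

lemma dist_eq_fd (x y : V h) (hy : (y.2 : ℕ) = 0) :
    (completeNaryTree 2 h).dist x y = fd (y.1 : ℕ) (x.1 : ℕ) (Nat.size (x.2 : ℕ)) := by
  apply le_antisymm (dist_le_fd x y hy)
  obtain ⟨p, hp⟩ := (reachable_all x y).exists_walk_length_eq_dist
  rw [← hp]
  exact fd_le_walk hy p

lemma power_adj_iff (r : ℕ) (x y : V h) (hy : (y.2 : ℕ) = 0) :
    ((completeNaryTree 2 h).power r).Adj y x ↔
      x ≠ y ∧ fd (y.1 : ℕ) (x.1 : ℕ) (Nat.size (x.2 : ℕ)) ≤ r := by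
  constructor
  · rintro ⟨h1, h2, h3⟩
    refine ⟨Ne.symm h1, ?_⟩
    rwa [SimpleGraph.dist_comm, dist_eq_fd x y hy] at h3
  · rintro ⟨h1, h2⟩
    exact ⟨Ne.symm h1, (reachable_all y x), by rwa [SimpleGraph.dist_comm, dist_eq_fd x y hy]⟩
end CBT

/-- distributivity of shiftRight over xor -/
lemma Nat.shiftRight_xor_distrib' (a b k : ℕ) : (a ^^^ b) >>> k = (a >>> k) ^^^ (b >>> k) := by
  apply Nat.eq_of_testBit_eq
  intro i
  simp [Nat.testBit_shiftRight, Nat.testBit_xor]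

section IsoLemmas

variable {α β : Type*} {G : SimpleGraph α} {G' : SimpleGraph β}

lemma iso_dist_le (e : G ≃g G') (u v : α) : G'.dist (e u) (e v) ≤ G.dist u v := by
  by_cases hr : G.Reachable u v
  · obtain ⟨p, hp⟩ := hr.exists_walk_length_eq_dist
    calc G'.dist (e u) (e v) ≤ (p.map e.toHom).length := SimpleGraph.dist_le _
    _ = p.length := by simp
    _ = G.dist u v := hp
  · have hr' : ¬ G'.Reachable (e u) (e v) := by
      intro hc
      have := hc.map e.symm.toHom
      exact hr (by simpa using this)
    rw [SimpleGraph.dist_eq_zero_of_not_reachable hr,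
      SimpleGraph.dist_eq_zero_of_not_reachable hr']

lemma iso_dist (e : G ≃g G') (u v : α) : G'.dist (e u) (e v) = G.dist u v := by
  apply le_antisymm (iso_dist_le e u v)
  have := iso_dist_le e.symm (e u) (e v)
  simpa using this

lemma iso_reachable (e : G ≃g G') (u v : α) : G'.Reachable (e u) (e v) ↔ G.Reachable u v := by
  constructor
  · intro hc
    have := hc.map e.symm.toHom
    simpa using this
  · intro hc
    exact hc.map e.toHom

lemma gdeg_power_iso (e : G ≃g G) (r : ℕ) (v : α) :
    gdeg (G.power r) (e v) = gdeg (G.power r) v := by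
  have hadj : ∀ u w : α, (G.power r).Adj (e u) (e w) ↔ (G.power r).Adj u w := by
    intro u w
    constructor
    · rintro ⟨h1, h2, h3⟩
      refine ⟨fun hq => h1 (by rw [hq]), (iso_reachable e u w).mp h2, ?_⟩
      rwa [iso_dist e u w] at h3
    · rintro ⟨h1, h2, h3⟩
      exact ⟨fun hq => h1 (e.toEquiv.injective hq), (iso_reachable e u w).mpr h2,
        by rwa [iso_dist e u w]⟩
  have himg : (G.power r).neighborSet (e v) = (e : α → α) '' ((G.power r).neighborSet v) := by
    ext w
    simp only [SimpleGraph.mem_neighborSet, Set.mem_image]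
    constructor
    · intro hw
      refine ⟨e.symm w, ?_, by simp⟩
      have hw' : (G.power r).Adj (e v) (e (e.symm w)) := by simpa using hw
      exact (hadj v (e.symm w)).mp hw'
    · rintro ⟨u, hu, rfl⟩
      exact (hadj v u).mpr hu
  unfold gdeg
  rw [himg]
  exact Set.ncard_image_of_injective _ (RelIso.injective e)

end IsoLemmas

namespace CBT

variable {h : ℕ}

lemma shift_lt {m : ℕ} (hm : m < 2 ^ h) {j : ℕ} (hj : j ≤ h) : m >>> (h - j) < 2 ^ j := by
  rw [Nat.shiftRight_eq_div_pow]
  apply Nat.div_lt_of_lt_mul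
  calc m < 2 ^ h := hm
  _ = 2 ^ (h - j) * 2 ^ j := by rw [← pow_add]; congr 1; omega

def sigMap (m : ℕ) (hm : m < 2 ^ h) : V h → V h := fun w =>
  ⟨w.1, ⟨(w.2 : ℕ) ^^^ (m >>> (h - (w.1 : ℕ))), by
    exact Nat.xor_lt_two_pow w.2.isLt (shift_lt hm (by omega))⟩⟩

lemma sigMap_involutive (m : ℕ) (hm : m < 2 ^ h) : Function.Involutive (sigMap (h := h) m hm) := by
  intro w
  apply vertex_ext
  · rfl
  · show ((w.2 : ℕ) ^^^ (m >>> (h - (w.1 : ℕ)))) ^^^ (m >>> (h - (w.1 : ℕ))) = (w.2 : ℕ)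
    rw [Nat.xor_assoc, Nat.xor_self, Nat.xor_zero]

lemma sigMap_adj (m : ℕ) (hm : m < 2 ^ h) {u v : V h}
    (huv : (completeNaryTree 2 h).Adj u v) :
    (completeNaryTree 2 h).Adj (sigMap m hm u) (sigMap m hm v) := by
  have key : ∀ x y : V h, (x.1 : ℕ) + 1 = (y.1 : ℕ) → (y.2 : ℕ) / 2 = (x.2 : ℕ) →
      ((y.2 : ℕ) ^^^ (m >>> (h - (y.1 : ℕ)))) / 2 = (x.2 : ℕ) ^^^ (m >>> (h - (x.1 : ℕ))) := by
    intro x y hj hl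
    have hy1 : (y.1 : ℕ) ≤ h := by omega
    have e1 : ((y.2 : ℕ) ^^^ (m >>> (h - (y.1 : ℕ)))) >>> 1
        = ((y.2 : ℕ) >>> 1) ^^^ ((m >>> (h - (y.1 : ℕ))) >>> 1) :=
      Nat.shiftRight_xor_distrib' _ _ _
    have e2 : (m >>> (h - (y.1 : ℕ))) >>> 1 = m >>> (h - (x.1 : ℕ)) := by
      rw [← Nat.shiftRight_add]
      congr 1
      omega
    have e3 : (y.2 : ℕ) >>> 1 = (x.2 : ℕ) := by
      rw [Nat.shiftRight_one]; exact hl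
    calc ((y.2 : ℕ) ^^^ (m >>> (h - (y.1 : ℕ)))) / 2
        = ((y.2 : ℕ) ^^^ (m >>> (h - (y.1 : ℕ)))) >>> 1 := (Nat.shiftRight_one _).symm
    _ = (x.2 : ℕ) ^^^ (m >>> (h - (x.1 : ℕ))) := by rw [e1, e2, e3]
  rcases huv with ⟨h1, h2⟩ | ⟨h1, h2⟩
  · exact Or.inl ⟨h1, key u v h1 h2⟩
  · exact Or.inr ⟨h1, key v u h1 h2⟩

def sigIso (m : ℕ) (hm : m < 2 ^ h) : (completeNaryTree 2 h) ≃g (completeNaryTree 2 h) where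
  toEquiv := (sigMap_involutive m hm).toPerm
  map_rel_iff' := by
    intro u v
    simp only [Function.Involutive.coe_toPerm]
    constructor
    · intro hadj
      have := sigMap_adj m hm hadj
      rwa [sigMap_involutive m hm u, sigMap_involutive m hm v] at this
    · exact sigMap_adj m hm

lemma gdeg_eq_level (r : ℕ) (w : V h) :
    gdeg ((completeNaryTree 2 h).power r) w
      = gdeg ((completeNaryTree 2 h).power r) ⟨w.1, ⟨0, Nat.two_pow_pos _⟩⟩ := by
  set m : ℕ := (w.2 : ℕ) * 2 ^ (h - (w.1 : ℕ)) with hmdef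
  have hj : (w.1 : ℕ) ≤ h := by omega
  have hm : m < 2 ^ h := by
    calc m < 2 ^ (w.1 : ℕ) * 2 ^ (h - (w.1 : ℕ)) :=
      (Nat.mul_lt_mul_right (Nat.two_pow_pos _)).mpr w.2.isLt
    _ = 2 ^ h := by rw [← pow_add]; congr 1; omega
  have hkey : sigIso m hm ⟨w.1, ⟨0, Nat.two_pow_pos _⟩⟩ = w := by
    apply vertex_ext
    · rfl
    · show (0 : ℕ) ^^^ (m >>> (h - (w.1 : ℕ))) = (w.2 : ℕ)
      rw [Nat.zero_xor, Nat.shiftRight_eq_div_pow]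
      exact Nat.mul_div_cancel _ (Nat.two_pow_pos _)
  calc gdeg ((completeNaryTree 2 h).power r) w
      = gdeg ((completeNaryTree 2 h).power r) (sigIso m hm ⟨w.1, ⟨0, Nat.two_pow_pos _⟩⟩) := by
        rw [hkey]
  _ = gdeg ((completeNaryTree 2 h).power r) ⟨w.1, ⟨0, Nat.two_pow_pos _⟩⟩ :=
        gdeg_power_iso (sigIso m hm) r _

lemma card_filter_sigma (P : V h → Prop) [DecidablePred P] :
    (univ.filter P).card
      = ∑ j : Fin (h+1), (univ.filter fun l : Fin (2^(j:ℕ)) => P ⟨j, l⟩).card := by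
  have hset : (univ.filter P)
      = (univ : Finset (Fin (h+1))).sigma (fun j => univ.filter fun l => P ⟨j, l⟩) := by
    ext w
    simp [Finset.mem_sigma]
  rw [hset, Finset.card_sigma]

lemma card_filter_fin_lt (n c : ℕ) :
    (univ.filter fun l : Fin n => (l : ℕ) < c).card = min c n := by
  have h1 : (univ.filter fun l : Fin n => (l : ℕ) < c).card
      = ((Finset.range n).filter fun x => x < c).card := by
    refine Finset.card_bij (fun l _ => (l : ℕ)) ?_ ?_ ?_
    · intro a ha
      simp only [Finset.mem_filter, Finset.mem_univ, true_and] at ha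
      simp [a.isLt, ha]
    · intro a _ b _ hab
      exact Fin.ext hab
    · intro b hb
      simp only [Finset.mem_filter, Finset.mem_range] at hb
      exact ⟨⟨b, hb.1⟩, by simp [hb.2], rfl⟩
  have h2 : (Finset.range n).filter (fun x => x < c) = Finset.range (min c n) := by
    ext x
    simp only [Finset.mem_filter, Finset.mem_range, Finset.mem_range]
    omega
  rw [h1, h2, Finset.card_range]

lemma card_filter_size_le (j b : ℕ) :
    (univ.filter fun l : Fin (2^j) => Nat.size (l:ℕ) ≤ b).card = 2 ^ min b j := by
  have h1 : (univ.filter fun l : Fin (2^j) => Nat.size (l:ℕ) ≤ b)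
      = (univ.filter fun l : Fin (2^j) => (l:ℕ) < 2^b) := by
    apply Finset.filter_congr
    intro l _
    rw [Nat.size_le]
  rw [h1, card_filter_fin_lt]
  rcases Nat.le_total b j with hbj | hbj
  · rw [min_eq_left (Nat.pow_le_pow_right (by norm_num) hbj), min_eq_left hbj]
  · rw [min_eq_right (Nat.pow_le_pow_right (by norm_num) hbj), min_eq_right hbj]

lemma card_filter_size_window (j a b : ℕ) (hab : a ≤ b) :
    (univ.filter fun l : Fin (2^j) => a < Nat.size (l:ℕ) ∧ Nat.size (l:ℕ) ≤ b).card
      = 2 ^ min b j - 2 ^ min a j := by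
  have h1 : (univ.filter fun l : Fin (2^j) => a < Nat.size (l:ℕ) ∧ Nat.size (l:ℕ) ≤ b)
      = (univ.filter fun l : Fin (2^j) => Nat.size (l:ℕ) ≤ b)
        \ (univ.filter fun l : Fin (2^j) => Nat.size (l:ℕ) ≤ a) := by
    ext l
    simp only [Finset.mem_filter, Finset.mem_sdiff, Finset.mem_univ, true_and]
    omega
  rw [h1, Finset.card_sdiff_of_subset, card_filter_size_le, card_filter_size_le]
  intro l hl
  simp only [Finset.mem_filter, Finset.mem_univ, true_and] at hl ⊢
  omega

lemma card_column (j0 : ℕ) (hj0 : j0 < h + 1) (Q : ℕ → Prop) [DecidablePred Q] :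
    (univ.filter fun w : V h => (w.1:ℕ) = j0 ∧ Q (Nat.size (w.2:ℕ))).card
      = (univ.filter fun l : Fin (2^j0) => Q (Nat.size (l:ℕ))).card := by
  rw [card_filter_sigma]
  rw [Finset.sum_eq_single (⟨j0, hj0⟩ : Fin (h+1))]
  · refine Finset.card_nbij (fun l => ⟨(l : ℕ), by simpa using l.isLt⟩) ?_ ?_ ?_
    · intro a ha
      simp only [Finset.mem_filter, Finset.mem_univ, true_and] at ha ⊢
      simpa using ha
    · intro a _ b _ hab
      exact Fin.ext (congrArg Fin.val hab)
    · intro b hb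
      simp only [Finset.coe_filter, Finset.mem_univ, true_and, Set.mem_setOf_eq] at hb
      refine ⟨⟨(b : ℕ), by simpa using b.isLt⟩, ?_, by apply Fin.ext; rfl⟩
      simp only [Finset.coe_filter, Finset.mem_univ, true_and, Set.mem_setOf_eq]
      simpa using hb
  · intro b _ hb
    rw [Finset.card_eq_zero, Finset.filter_eq_empty_iff]
    rintro l -
    intro hcon
    exact hb (Fin.ext hcon.1)
  · intro hcon
    exact absurd (Finset.mem_univ _) hcon

/-- partial sums of `2 ^ (k / 2)` -/
def Fs (n : ℕ) : ℕ := ∑ k ∈ Finset.range n, 2 ^ (k / 2)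

lemma Fs_succ (n : ℕ) : Fs (n + 1) = Fs n + 2 ^ (n / 2) := Finset.sum_range_succ _ _

lemma Fs_le (r : ℕ) (hr : 1 ≤ r) : Fs (r + 1) ≤ 2 ^ r := by
  induction r with
  | zero => omega
  | succ r ih =>
    rcases Nat.eq_zero_or_pos r with rfl | hr0
    · simp [Fs, Finset.sum_range_succ]
    · have h1 := ih hr0
      rw [Fs_succ]
      have h2 : 2 ^ ((r+1) / 2) ≤ 2 ^ r := Nat.pow_le_pow_right (by norm_num) (by omega)
      have h3 : (2:ℕ) ^ (r + 1) = 2 ^ r + 2 ^ r := by rw [pow_succ]; omega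
      omega

lemma gdeg_formula (r d : ℕ) (hd : d < h + 1) :
    gdeg ((completeNaryTree 2 h).power r) ⟨⟨d, hd⟩, ⟨0, Nat.two_pow_pos _⟩⟩ + 1
      = (univ.filter fun w : V h => fd d (w.1:ℕ) (Nat.size (w.2:ℕ)) ≤ r).card := by
  set y : V h := ⟨⟨d, hd⟩, ⟨0, Nat.two_pow_pos _⟩⟩ with hydef
  have hy : (y.2 : ℕ) = 0 := rfl
  have hy1 : (y.1 : ℕ) = d := rfl
  have hmem : y ∈ (univ.filter fun w : V h => fd d (w.1:ℕ) (Nat.size (w.2:ℕ)) ≤ r) := by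
    simp only [Finset.mem_filter, Finset.mem_univ, true_and, hy1, hy, Nat.size_zero]
    unfold fd; omega
  have hset : ((completeNaryTree 2 h).power r).neighborSet y
      = ↑(((univ.filter fun w : V h => fd d (w.1:ℕ) (Nat.size (w.2:ℕ)) ≤ r)).erase y) := by
    ext w
    rw [SimpleGraph.mem_neighborSet, power_adj_iff r w y hy]
    simp only [Finset.coe_erase, Set.mem_diff, Finset.mem_coe, Finset.mem_filter,
      Finset.mem_univ, true_and, Set.mem_singleton_iff, hy1]
    tauto
  unfold gdeg
  rw [hset, Set.ncard_coe_finset, Finset.card_erase_of_mem hmem]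
  have hpos : 0 < (univ.filter fun w : V h => fd d (w.1:ℕ) (Nat.size (w.2:ℕ)) ≤ r).card :=
    Finset.card_pos.mpr ⟨y, hmem⟩
  omega

lemma S_lt {r i : ℕ} (hh : 2 ≤ h) (hi : i < h) (hr1 : 1 ≤ r) (hr2 : r ≤ 2*h - 1) :
    (univ.filter fun w : V h => fd h (w.1:ℕ) (Nat.size (w.2:ℕ)) ≤ r).card
      < (univ.filter fun w : V h => fd i (w.1:ℕ) (Nat.size (w.2:ℕ)) ≤ r).card := by
  classical
  set PH : V h → Prop := fun w => fd h (w.1:ℕ) (Nat.size (w.2:ℕ)) ≤ r with hPH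
  set PI : V h → Prop := fun w => fd i (w.1:ℕ) (Nat.size (w.2:ℕ)) ≤ r with hPI
  set X : Finset (V h) := univ.filter (fun w => PH w ∧ ¬ PI w) with hX
  set Y : Finset (V h) := univ.filter (fun w => PI w ∧ ¬ PH w) with hY
  have hpart1 : (univ.filter (fun w => PH w ∧ PI w)).card + X.card
      = (univ.filter PH).card := by
    rw [hX, ← Finset.filter_filter, ← Finset.filter_filter]
    exact Finset.card_filter_add_card_filter_not _
  have hpart2 : (univ.filter (fun w => PI w ∧ PH w)).card + Y.card
      = (univ.filter PI).card := by
    rw [hY, ← Finset.filter_filter, ← Finset.filter_filter]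
    exact Finset.card_filter_add_card_filter_not _
  have hcomm : (univ.filter (fun w => PH w ∧ PI w)) = (univ.filter (fun w => PI w ∧ PH w)) := by
    apply Finset.filter_congr
    intro w _
    tauto
  suffices hXY : X.card < Y.card by
    rw [hcomm] at hpart1
    show (univ.filter PH).card < (univ.filter PI).card
    omega
  -- basic facts about vertices
  have hfacts : ∀ w : V h, Nat.size (w.2 : ℕ) ≤ (w.1 : ℕ) ∧ (w.1 : ℕ) ≤ h :=
    fun w => ⟨size_le_of_lt w.2.isLt, by have := w.1.isLt; omega⟩
  by_cases hAB : h ≤ r + i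
  · -- Case A : X is empty, Y is nonempty
    have hXempty : X = ∅ := by
      rw [hX, Finset.filter_eq_empty_iff]
      rintro w -
      obtain ⟨hs, hj⟩ := hfacts w
      rw [hPH, hPI]
      unfold fd
      omega
    have hYne : 0 < Y.card := by
      apply Finset.card_pos.mpr
      -- choose (j, s) depending on parity of r and on h - i
      rcases Nat.lt_or_ge (r % 2) 1 with hpar | hpar
      · -- r even
        rcases Nat.lt_or_ge (i + 1) h with hii | hii
        · -- h - i ≥ 2 : vertex at depth h with size r/2+1
          refine ⟨⟨⟨h, by omega⟩, ⟨2 ^ (r/2), by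
            show 2 ^ (r/2) < 2 ^ h
            apply Nat.pow_lt_pow_right (by norm_num); omega⟩⟩, ?_⟩
          rw [hY]
          simp only [Finset.mem_filter, Finset.mem_univ, true_and, hPI, hPH]
          show fd i h (Nat.size (2 ^ (r/2))) ≤ r ∧ ¬ fd h h (Nat.size (2 ^ (r/2))) ≤ r
          rw [Nat.size_pow]
          unfold fd
          omega
        · -- i = h - 1 : vertex at depth h-1 with size r/2
          refine ⟨⟨⟨h - 1, by omega⟩, ⟨2 ^ (r/2 - 1), by
            show 2 ^ (r/2 - 1) < 2 ^ (h - 1)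
            apply Nat.pow_lt_pow_right (by norm_num); omega⟩⟩, ?_⟩
          rw [hY]
          simp only [Finset.mem_filter, Finset.mem_univ, true_and, hPI, hPH]
          show fd i (h-1) (Nat.size (2 ^ (r/2 - 1))) ≤ r ∧ ¬ fd h (h-1) (Nat.size (2 ^ (r/2 - 1))) ≤ r
          rw [Nat.size_pow]
          unfold fd
          omega
      · -- r odd : vertex at depth h with size (r+1)/2
        refine ⟨⟨⟨h, by omega⟩, ⟨2 ^ ((r+1)/2 - 1), by
          show 2 ^ ((r+1)/2 - 1) < 2 ^ h
          apply Nat.pow_lt_pow_right (by norm_num); omega⟩⟩, ?_⟩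
        rw [hY]
        simp only [Finset.mem_filter, Finset.mem_univ, true_and, hPI, hPH]
        show fd i h (Nat.size (2 ^ ((r+1)/2 - 1))) ≤ r ∧ ¬ fd h h (Nat.size (2 ^ ((r+1)/2 - 1))) ≤ r
        rw [Nat.size_pow]
        unfold fd
        omega
    have hX0 : X.card = 0 := by rw [hXempty]; exact Finset.card_empty
    omega
  · -- Case B : r + i + 1 ≤ h
    push_neg at hAB
    -- upper bound for X
    set a : ℕ := 2*r + i + 1 - h with hadef
    have haler : a ≤ r := by omega
    have hXbound : X.card + Fs a ≤ Fs (r + 1) := by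
      have h1 : X.card ≤ ∑ k ∈ Finset.Ico a (r+1), 2 ^ (k / 2) := by
        rw [hX, card_filter_sigma]
        have h2 : ∀ j : Fin (h+1),
            (univ.filter fun l : Fin (2^(j:ℕ)) => PH ⟨j, l⟩ ∧ ¬ PI ⟨j, l⟩).card
              ≤ (fun jj => if r + i + 1 ≤ jj ∧ h ≤ r + jj then 2 ^ ((r + jj - h)/2) else 0) (j:ℕ) := by
          intro j
          simp only
          split_ifs with hcond
          · calc (univ.filter fun l : Fin (2^(j:ℕ)) => PH ⟨j, l⟩ ∧ ¬ PI ⟨j, l⟩).card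
                ≤ (univ.filter fun l : Fin (2^(j:ℕ)) =>
                    Nat.size (l:ℕ) ≤ (r + (j:ℕ) - h)/2).card := by
                  apply Finset.card_le_card
                  intro l hl
                  simp only [Finset.mem_filter, Finset.mem_univ, true_and, hPH, hPI] at hl ⊢
                  have hs : Nat.size (l : ℕ) ≤ (j : ℕ) := size_le_of_lt l.isLt
                  have hjh : (j : ℕ) ≤ h := by have := j.isLt; omega
                  revert hl
                  show fd h (j:ℕ) (Nat.size (l:ℕ)) ≤ r ∧ ¬ fd i (j:ℕ) (Nat.size (l:ℕ)) ≤ r → _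
                  unfold fd
                  omega
            _ = 2 ^ min ((r + (j:ℕ) - h)/2) (j:ℕ) := card_filter_size_le _ _
            _ ≤ 2 ^ ((r + (j:ℕ) - h)/2) := Nat.pow_le_pow_right (by norm_num) (min_le_left _ _)
          · apply Nat.le_zero.mpr
            rw [Finset.card_eq_zero, Finset.filter_eq_empty_iff]
            rintro l -
            have hs : Nat.size (l : ℕ) ≤ (j : ℕ) := size_le_of_lt l.isLt
            have hjh : (j : ℕ) ≤ h := by have := j.isLt; omega
            simp only [hPH, hPI]
            show ¬ (fd h (j:ℕ) (Nat.size (l:ℕ)) ≤ r ∧ ¬ fd i (j:ℕ) (Nat.size (l:ℕ)) ≤ r)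
            unfold fd
            omega
        calc ∑ j : Fin (h+1), (univ.filter fun l : Fin (2^(j:ℕ)) => PH ⟨j, l⟩ ∧ ¬ PI ⟨j, l⟩).card
            ≤ ∑ j : Fin (h+1), (fun jj => if r + i + 1 ≤ jj ∧ h ≤ r + jj
                then 2 ^ ((r + jj - h)/2) else 0) (j:ℕ) := Finset.sum_le_sum (fun j _ => h2 j)
        _ = ∑ jj ∈ Finset.range (h+1), (if r + i + 1 ≤ jj ∧ h ≤ r + jj
                then 2 ^ ((r + jj - h)/2) else 0) := by
              exact Fin.sum_univ_eq_sum_range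
                (fun jj => if r + i + 1 ≤ jj ∧ h ≤ r + jj then 2 ^ ((r + jj - h)/2) else 0) (h+1)
        _ = ∑ jj ∈ (Finset.range (h+1)).filter (fun jj => r + i + 1 ≤ jj ∧ h ≤ r + jj),
                2 ^ ((r + jj - h)/2) := (Finset.sum_filter _ _).symm
        _ = ∑ k ∈ ((Finset.range (h+1)).filter (fun jj => r + i + 1 ≤ jj ∧ h ≤ r + jj)).image
                (fun jj => r + jj - h), 2 ^ (k / 2) := by
              rw [Finset.sum_image]
              intro x hx y hy hxy
              simp only [Finset.coe_filter, Finset.mem_coe, Finset.mem_filter, Finset.mem_range, Set.mem_setOf_eq] at hx hy hxy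
              omega
        _ ≤ ∑ k ∈ Finset.Ico a (r+1), 2 ^ (k / 2) := by
              apply Finset.sum_le_sum_of_subset
              intro k hk
              simp only [Finset.mem_image, Finset.mem_filter, Finset.mem_range] at hk
              obtain ⟨jj, hjj, rfl⟩ := hk
              simp only [Finset.mem_Ico]
              omega
      have h3 : Fs a + ∑ k ∈ Finset.Ico a (r+1), 2 ^ (k / 2) = Fs (r+1) := by
        unfold Fs
        rw [Finset.range_eq_Ico, Finset.range_eq_Ico]
        exact Finset.sum_Ico_consecutive _ (by omega) (by omega)
      omega
    -- lower bound for Y via two columns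
    set Z1 : Finset (V h) := univ.filter (fun w : V h => (w.1:ℕ) = r + i ∧
      (2 * Nat.size (w.2:ℕ) + h ≥ 2*r + i + 1 ∧ Nat.size (w.2:ℕ) ≤ r)) with hZ1
    set Z2 : Finset (V h) := univ.filter (fun w : V h => (w.1:ℕ) = i ∧
      2 * Nat.size (w.2:ℕ) ≤ r) with hZ2
    have hZ1sub : Z1 ⊆ Y := by
      intro w hw
      rw [hZ1] at hw
      rw [hY]
      simp only [Finset.mem_filter, Finset.mem_univ, true_and] at hw ⊢
      obtain ⟨hs, hj⟩ := hfacts w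
      rw [hPI, hPH]
      unfold fd
      omega
    have hZ2sub : Z2 ⊆ Y := by
      intro w hw
      rw [hZ2] at hw
      rw [hY]
      simp only [Finset.mem_filter, Finset.mem_univ, true_and] at hw ⊢
      obtain ⟨hs, hj⟩ := hfacts w
      rw [hPI, hPH]
      unfold fd
      omega
    have hdisj : Disjoint Z1 Z2 := by
      rw [Finset.disjoint_left]
      intro w h1 h2
      rw [hZ1] at h1
      rw [hZ2] at h2
      simp only [Finset.mem_filter] at h1 h2
      omega
    have hcards : Z1.card + Z2.card ≤ Y.card := by
      rw [← Finset.card_union_of_disjoint hdisj]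
      exact Finset.card_le_card (Finset.union_subset hZ1sub hZ2sub)
    have hZ2card : Z2.card = 2 ^ min (r/2) i := by
      rw [hZ2]
      have : (univ.filter (fun w : V h => (w.1:ℕ) = i ∧ 2 * Nat.size (w.2:ℕ) ≤ r))
          = (univ.filter (fun w : V h => (w.1:ℕ) = i ∧ Nat.size (w.2:ℕ) ≤ r/2)) := by
        apply Finset.filter_congr
        intro w _
        constructor
        · rintro ⟨h1, h2⟩; exact ⟨h1, by omega⟩
        · rintro ⟨h1, h2⟩; exact ⟨h1, by omega⟩
      rw [this, card_column i (by omega) (fun s => s ≤ r/2), card_filter_size_le]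
    have hZ2pos : 0 < Z2.card := by
      rw [hZ2card]; exact Nat.two_pow_pos _
    -- split on whether a = 0
    rcases Nat.eq_zero_or_pos a with ha0 | ha0
    · -- a = 0 : Z1 is the full window size ≤ r in column r+i
      have hZ1card : Z1.card = 2 ^ r := by
        rw [hZ1]
        have : (univ.filter (fun w : V h => (w.1:ℕ) = r + i ∧
            (2 * Nat.size (w.2:ℕ) + h ≥ 2*r + i + 1 ∧ Nat.size (w.2:ℕ) ≤ r)))
            = (univ.filter (fun w : V h => (w.1:ℕ) = r + i ∧ Nat.size (w.2:ℕ) ≤ r)) := by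
          apply Finset.filter_congr
          intro w _
          constructor
          · rintro ⟨h1, h2⟩; exact ⟨h1, h2.2⟩
          · rintro ⟨h1, h2⟩; exact ⟨h1, by omega, h2⟩
        rw [this, card_column (r+i) (by omega) (fun s => s ≤ r), card_filter_size_le]
        congr 1
        omega
      have hFs0 : Fs 0 = 0 := rfl
      have hFsle := Fs_le r hr1
      omega
    · -- a ≥ 1 : Z1 is a window (c, r] in column r+i
      set c : ℕ := (a - 1)/2 with hcdef
      have hZ1card : Z1.card = 2 ^ r - 2 ^ c := by
        rw [hZ1]
        have : (univ.filter (fun w : V h => (w.1:ℕ) = r + i ∧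
            (2 * Nat.size (w.2:ℕ) + h ≥ 2*r + i + 1 ∧ Nat.size (w.2:ℕ) ≤ r)))
            = (univ.filter (fun w : V h => (w.1:ℕ) = r + i ∧
              (c < Nat.size (w.2:ℕ) ∧ Nat.size (w.2:ℕ) ≤ r))) := by
          apply Finset.filter_congr
          intro w _
          constructor
          · rintro ⟨h1, h2⟩; exact ⟨h1, by omega, h2.2⟩
          · rintro ⟨h1, h2⟩; exact ⟨h1, by omega, h2.2⟩
        rw [this, card_column (r+i) (by omega) (fun s => c < s ∧ s ≤ r),
          card_filter_size_window _ _ _ (by omega)]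
        rw [min_eq_left (by omega : r ≤ r + i), min_eq_left (by omega : c ≤ r + i)]
      have h2c : (2:ℕ) ^ c ≤ 2 ^ r := Nat.pow_le_pow_right (by norm_num) (by omega)
      have hZ1card' : Z1.card + 2 ^ c = 2 ^ r := by omega
      have hFsa : Fs a = Fs (a - 1) + 2 ^ c := by
        conv_lhs => rw [show a = (a-1)+1 from by omega]
        rw [Fs_succ, hcdef]
      have hFsle := Fs_le r hr1
      omega

lemma gdeg_lt {r : ℕ} (hh : 2 ≤ h) (hr1 : 1 ≤ r) (hr2 : r ≤ 2*h - 1)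
    {d : ℕ} (hd : d < h) :
    gdeg ((completeNaryTree 2 h).power r) ⟨⟨h, by omega⟩, ⟨0, Nat.two_pow_pos _⟩⟩
      < gdeg ((completeNaryTree 2 h).power r) ⟨⟨d, by omega⟩, ⟨0, Nat.two_pow_pos _⟩⟩ := by
  have h1 := gdeg_formula (h := h) r h (by omega)
  have h2 := gdeg_formula (h := h) r d (by omega)
  have h3 := S_lt (h := h) (r := r) (i := d) hh hd hr1 hr2
  omega

lemma card_level (j0 : ℕ) (hj0 : j0 < h + 1) :
    (univ.filter fun w : V h => (w.1:ℕ) = j0).card = 2 ^ j0 := by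
  have he : (univ.filter fun w : V h => (w.1:ℕ) = j0)
      = (univ.filter fun w : V h => (w.1:ℕ) = j0 ∧ (fun _ : ℕ => True) (Nat.size (w.2:ℕ))) := by
    apply Finset.filter_congr
    intro w _
    simp
  rw [he, card_column j0 hj0 (fun _ => True)]
  simp

lemma sum_two_pow (n : ℕ) : ∑ k ∈ Finset.range n, 2 ^ k = 2 ^ n - 1 := by
  induction n with
  | zero => simp
  | succ n ih =>
    rw [Finset.sum_range_succ, ih, pow_succ]
    have := Nat.one_le_two_pow (n := n)
    omega

lemma card_V : (univ : Finset (V h)).card = 2 ^ (h+1) - 1 := by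
  rw [Finset.card_univ, Fintype.card_sigma]
  have h1 : ∀ j : Fin (h+1), Fintype.card (Fin (2 ^ (j:ℕ))) = 2 ^ (j:ℕ) :=
    fun j => Fintype.card_fin _
  calc ∑ j : Fin (h+1), Fintype.card (Fin (2 ^ (j:ℕ)))
      = ∑ j : Fin (h+1), 2 ^ (j:ℕ) := Finset.sum_congr rfl (fun j _ => h1 j)
  _ = ∑ k ∈ Finset.range (h+1), 2 ^ k := Fin.sum_univ_eq_sum_range (fun k => 2 ^ k) (h+1)
  _ = 2 ^ (h+1) - 1 := sum_two_pow _

lemma gdeg_level' (r : ℕ) (w : V h) :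
    gdeg ((completeNaryTree 2 h).power r) w
      = gdeg ((completeNaryTree 2 h).power r)
          ⟨⟨(w.1 : ℕ), w.1.isLt⟩, ⟨0, Nat.two_pow_pos _⟩⟩ := by
  rw [gdeg_eq_level r w]

lemma leaf_class {r : ℕ} (hh : 2 ≤ h) (hr1 : 1 ≤ r) (hr2 : r ≤ 2*h - 1)
    (v : V h) (hv : (v.1 : ℕ) = h) :
    (univ.filter fun u : V h =>
        gdeg ((completeNaryTree 2 h).power r) u = gdeg ((completeNaryTree 2 h).power r) v)
      = univ.filter fun w : V h => (w.1:ℕ) = h := by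
  apply Finset.filter_congr
  intro u _
  rw [gdeg_level' r u, gdeg_level' r v]
  constructor
  · intro hequ
    by_contra hne
    have hu1 : (u.1 : ℕ) < h := by have := u.1.isLt; omega
    have hlt := gdeg_lt (h := h) hh hr1 hr2 hu1
    -- identify the two vertices at level h resp. u.1
    have e1 : (⟨⟨(v.1:ℕ), v.1.isLt⟩, ⟨0, Nat.two_pow_pos _⟩⟩ : V h)
        = ⟨⟨h, by omega⟩, ⟨0, Nat.two_pow_pos _⟩⟩ := vertex_ext (by simpa using hv) rfl
    have e2 : (⟨⟨(u.1:ℕ), u.1.isLt⟩, ⟨0, Nat.two_pow_pos _⟩⟩ : V h)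
        = ⟨⟨(u.1:ℕ), by omega⟩, ⟨0, Nat.two_pow_pos _⟩⟩ := vertex_ext rfl rfl
    rw [e1] at hequ
    rw [e2] at hequ
    rw [hequ] at hlt
    exact absurd hlt (lt_irrefl _)
  · intro hequ
    have e1 : (⟨⟨(v.1:ℕ), v.1.isLt⟩, ⟨0, Nat.two_pow_pos _⟩⟩ : V h)
        = ⟨⟨(u.1:ℕ), u.1.isLt⟩, ⟨0, Nat.two_pow_pos _⟩⟩ :=
      vertex_ext (by show (v.1:ℕ) = (u.1:ℕ); omega) rfl
    rw [e1]

end CBT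

/-- For the complete binary tree `T` of height `h ≥ 2` and `1 ≤ r ≤ 2h - 1`,
the curling number of the `r`-th power `T^r` is `2 ^ h`. -/
theorem curlingNumber_completeBinaryTree_power (h r : ℕ) (hh : 2 ≤ h)
    (hr1 : 1 ≤ r) (hr2 : r ≤ 2 * h - 1) :
    curlingNumber ((completeNaryTree 2 h).power r) = 2 ^ h := by
  unfold curlingNumber
  have hpow : (2:ℕ) ^ (h+1) = 2 ^ h + 2 ^ h := by rw [pow_succ]; omega
  have hlevel := CBT.card_level (h := h) h (by omega)
  have htotal := CBT.card_V (h := h)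
  apply le_antisymm
  · apply Finset.sup_le
    intro v _
    by_cases hv : (v.1 : ℕ) = h
    · rw [CBT.leaf_class hh hr1 hr2 v hv, hlevel]
    · have hv1 : (v.1:ℕ) < h := by have := v.1.isLt; omega
      have hsub : (univ.filter fun u : CBT.V h =>
            gdeg ((completeNaryTree 2 h).power r) u = gdeg ((completeNaryTree 2 h).power r) v)
          ⊆ univ.filter (fun w : CBT.V h => ¬ ((w.1:ℕ) = h)) := by
        intro u hu
        simp only [Finset.mem_filter, Finset.mem_univ, true_and] at hu ⊢
        intro hu1
        have hlt := CBT.gdeg_lt (h := h) hh hr1 hr2 hv1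
        rw [CBT.gdeg_level' r u, CBT.gdeg_level' r v] at hu
        have e1 : (⟨⟨(u.1:ℕ), u.1.isLt⟩, ⟨0, Nat.two_pow_pos _⟩⟩ : CBT.V h)
            = ⟨⟨h, by omega⟩, ⟨0, Nat.two_pow_pos _⟩⟩ :=
          CBT.vertex_ext (by show (u.1:ℕ) = h; omega) rfl
        have e2 : (⟨⟨(v.1:ℕ), v.1.isLt⟩, ⟨0, Nat.two_pow_pos _⟩⟩ : CBT.V h)
            = ⟨⟨(v.1:ℕ), by omega⟩, ⟨0, Nat.two_pow_pos _⟩⟩ :=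
          CBT.vertex_ext rfl rfl
        rw [e1, e2] at hu
        rw [hu] at hlt
        exact absurd hlt (lt_irrefl _)
      have hpartition := Finset.card_filter_add_card_filter_not
        (s := (univ : Finset (CBT.V h))) (p := fun w : CBT.V h => (w.1:ℕ) = h)
      rw [hlevel, htotal] at hpartition
      refine le_trans (Finset.card_le_card hsub) ?_
      omega
  · have hmem : (⟨⟨h, by omega⟩, ⟨0, Nat.two_pow_pos _⟩⟩ : CBT.V h) ∈ (univ : Finset (CBT.V h)) :=
      Finset.mem_univ _
    have hle := Finset.le_sup (f := fun v : CBT.V h => (univ.filter fun u : CBT.V h =>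
      gdeg ((completeNaryTree 2 h).power r) u = gdeg ((completeNaryTree 2 h).power r) v).card) hmem
    simp only at hle
    rw [CBT.leaf_class hh hr1 hr2 _ rfl, hlevel] at hle
    exact hle
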